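/- Let X be a metrizable compact space and Φ : X → X a continuous map such that for every continuous f : X → 𝕋 there exists λ_f ∈ 𝕋 with f(Φ(x)) = λ_f · f(x) for all x ∈ X. Then Φ is the identity map. In particular, if K is a metrizable compact abelian group and χ ∈ K satisfies: for every continuous f : K → 𝕋 there is λ_f ∈ 𝕋 with f(χξ) = λ_f f(ξ) for all ξ ∈ K, then χ = 1. -/

import Mathlib

open Set Real

/-- Injectivity of `Circle.exp` on `[-1, 1]`. -/
lemma circle_exp_inj_small {x y : ℝ} (hx : x ∈ Set.Icc (-1 : ℝ) 1)
    (hy : y ∈ Set.Icc (-1 : ℝ) 1) (h : Circle.exp x = Circle.exp y) : x = y := by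
  obtain ⟨m, hm⟩ := Circle.exp_eq_exp.mp h
  have hpi : (3 : ℝ) < π := by
    have := Real.pi_gt_d6
    linarith
  have hm0 : m = 0 := by
    rcases hx with ⟨hx1, hx2⟩
    rcases hy with ⟨hy1, hy2⟩
    by_contra hne
    have h1 : (1 : ℝ) ≤ |(m : ℝ)| := by
      have : (1 : ℤ) ≤ |m| := Int.one_le_abs hne
      exact_mod_cast this
    have : |x - y| = |(m : ℝ)| * (2 * π) := by
      rw [hm]; ring_nf
      rw [abs_mul, abs_mul]
      simp [abs_of_nonneg Real.pi_pos.le]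
      ring
    have h2 : |x - y| ≤ 2 := by
      rw [abs_sub_le_iff]; constructor <;> linarith
    nlinarith [abs_nonneg ((m : ℝ))]
  simp [hm0] at hm
  exact hm

theorem stmt9_first :
    (∀ (X : Type) [TopologicalSpace X] [CompactSpace X] [TopologicalSpace.MetrizableSpace X]
        (Φ : X → X), Continuous Φ →
        (∀ f : C(X, Circle), ∃ l : Circle, ∀ x : X, f (Φ x) = l * f x) →
        Φ = id) := by
  intro X _ _ _ Φ hΦ h
  funext x₀
  by_contra hne
  simp only [id_eq] at hne
  letI := TopologicalSpace.metrizableSpaceMetric X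
  -- Urysohn function g : X → ℝ with g x₀ = 0, g (Φ x₀) = 1, values in [0,1]
  obtain ⟨g, hg0, hg1, hgmem⟩ := exists_continuous_zero_one_of_isClosed
    (isClosed_singleton (x := Φ x₀)) (isClosed_singleton (x := x₀))
    (by simp [Set.disjoint_singleton, hne])
  have hg0' : g (Φ x₀) = 0 := hg0 rfl
  have hg1' : g x₀ = 1 := hg1 rfl
  -- f = exp ∘ g
  set f : C(X, Circle) := ⟨fun x => Circle.exp (g x), Circle.exp.continuous.comp g.continuous⟩
    with hf
  obtain ⟨l, hl⟩ := h f
  have key : ∀ x, Circle.exp (g (Φ x) - g x) = l := by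
    intro x
    have := hl x
    simp only [hf, ContinuousMap.coe_mk] at this
    have : Circle.exp (g (Φ x) - g x) * Circle.exp (g x) = l * Circle.exp (g x) := by
      rw [← Circle.exp_add]; rw [sub_add_cancel]; exact this
    exact mul_right_cancel this
  have hdiff : ∀ x, g (Φ x) - g x ∈ Set.Icc (-1 : ℝ) 1 := by
    intro x
    have h1 := hgmem x
    have h2 := hgmem (Φ x)
    simp only [Set.mem_Icc] at h1 h2 ⊢
    constructor <;> linarith
  have heq : g (Φ (Φ x₀)) - g (Φ x₀) = g (Φ x₀) - g x₀ := by
    apply circle_exp_inj_small (hdiff _) (hdiff _)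
    rw [key, key]
  rw [hg0', hg1'] at heq
  have := (hgmem (Φ (Φ x₀))).1
  linarith

theorem stmt9 :
    (∀ (X : Type) [TopologicalSpace X] [CompactSpace X] [TopologicalSpace.MetrizableSpace X]
        (Φ : X → X), Continuous Φ →
        (∀ f : C(X, Circle), ∃ l : Circle, ∀ x : X, f (Φ x) = l * f x) →
        Φ = id) ∧
    (∀ (K : Type) [TopologicalSpace K] [CompactSpace K] [TopologicalSpace.MetrizableSpace K]
        [CommGroup K] [IsTopologicalGroup K] (χ : K),
        (∀ f : C(K, Circle), ∃ l : Circle, ∀ ξ : K, f (χ * ξ) = l * f ξ) →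
        χ = 1) := by
  refine ⟨stmt9_first, ?_⟩
  intro K _ _ _ _ _ χ h
  have := stmt9_first K (fun ξ => χ * ξ) (continuous_const.mul continuous_id) h
  have := congrFun this 1
  simpa using this
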